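/- For integers k ≥ 0, q ≥ 0, and p ≥ 1, the number of q-satisfying sequences with exactly k 1's and qk+p−1 0's equals (p/(qk+p)) · binom((q+1)k+p−1, k). -/

import Mathlib

/-- A sequence of 0's (`false`) and 1's (`true`) is `q`-satisfying if in every
prefix the number of 0's is at least `q` times the number of 1's. -/
def QSatisfying (q : ℕ) (l : List Bool) : Prop :=
  ∀ m : ℕ, m ≤ l.length →
    q * (l.take m).count true ≤ (l.take m).count false

instance (q : ℕ) (l : List Bool) : Decidable (QSatisfying q l) :=
  Nat.decidableBallLE _ _

namespace CQS

lemma length_eq_counts (l : List Bool) : l.length = l.count true + l.count false := by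
  induction l with
  | nil => simp
  | cons h t ih =>
    simp only [List.length_cons, List.count_cons, ih]
    cases h <;> simp <;> omega

def allLists (n : ℕ) : Finset (List Bool) :=
  Finset.univ.image fun f : Fin n → Bool => List.ofFn f

lemma mem_allLists {n : ℕ} {l : List Bool} : l ∈ allLists n ↔ l.length = n := by
  simp only [allLists, Finset.mem_image, Finset.mem_univ, true_and]
  constructor
  · rintro ⟨f, rfl⟩; simp
  · rintro rfl; exact ⟨l.get, List.ofFn_get l⟩

def setF (q a b : ℕ) : Finset (List Bool) :=
  (allLists (a + b)).filter fun l =>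
    l.count true = a ∧ l.count false = b ∧ QSatisfying q l

lemma mem_setF {q a b : ℕ} {l : List Bool} :
    l ∈ setF q a b ↔ l.count true = a ∧ l.count false = b ∧ QSatisfying q l := by
  simp only [setF, Finset.mem_filter, mem_allLists, and_iff_right_iff_imp]
  rintro ⟨h1, h2, -⟩
  rw [length_eq_counts, h1, h2]

lemma qs_mul_le {q : ℕ} {l : List Bool} (h : QSatisfying q l) :
    q * l.count true ≤ l.count false := by
  simpa [List.take_length] using h l.length le_rfl

lemma qs_take {q : ℕ} {l : List Bool} (h : QSatisfying q l) (m : ℕ) :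
    QSatisfying q (l.take m) := by
  intro m' hm'
  rw [List.take_take]
  have h1 : m' ⊓ m ≤ l.length := by
    have := hm'
    simp only [List.length_take] at this
    omega
  exact h _ h1

lemma qs_concat {q : ℕ} {l : List Bool} {c : Bool} (hl : QSatisfying q l)
    (h : q * ((l ++ [c]).count true) ≤ (l ++ [c]).count false) :
    QSatisfying q (l ++ [c]) := by
  intro m hm
  rcases le_or_gt m l.length with h' | h'
  · rw [List.take_append_of_le_length h']; exact hl m h'
  · have hm' : m = l.length + 1 := by simp at hm; omega
    have : (l ++ [c]).take m = l ++ [c] := by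
      apply List.take_of_length_le; simp; omega
    rw [this]; exact h

lemma setF_empty {q a b : ℕ} (h : ¬ q * a ≤ b) : setF q a b = ∅ := by
  ext l
  simp only [Finset.notMem_empty, iff_false, mem_setF]
  rintro ⟨h1, h2, h3⟩
  exact h (h1 ▸ h2 ▸ qs_mul_le h3)

lemma image_true (q a b : ℕ) (hq : q * (a + 1) ≤ b) :
    (setF q a b).image (· ++ [true]) =
      (setF q (a + 1) b).filter (fun l => l.getLast? = some true) := by
  ext l'
  simp only [Finset.mem_image, Finset.mem_filter, mem_setF]
  constructor
  · rintro ⟨l, ⟨h1, h2, h3⟩, rfl⟩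
    have hct : (l ++ [true]).count true = a + 1 := by simp [List.count_append, h1]
    have hcf : (l ++ [true]).count false = b := by simp [List.count_append, h2]
    refine ⟨⟨hct, hcf, qs_concat h3 ?_⟩, List.getLast?_concat⟩
    rw [hct, hcf]; exact hq
  · rintro ⟨⟨h1, h2, h3⟩, h4⟩
    have hne : l' ≠ [] := by rintro rfl; simp at h4
    have hdec : l'.dropLast ++ [true] = l' := by
      have hh := List.dropLast_append_getLast hne
      have hc : l'.getLast hne = true := by
        have := List.getLast?_eq_getLast hne
        rw [this] at h4; exact Option.some_injective _ h4
      rw [hc] at hh; exact hh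
    refine ⟨l'.dropLast, ⟨?_, ?_, ?_⟩, hdec⟩
    · have := congrArg (List.count true) hdec
      simp [List.count_append] at this; omega
    · have := congrArg (List.count false) hdec
      simp [List.count_append] at this; omega
    · rw [List.dropLast_eq_take]; exact qs_take h3 _

lemma image_false (q a b : ℕ) (hq : q * a ≤ b + 1) :
    (setF q a b).image (· ++ [false]) =
      (setF q a (b + 1)).filter (fun l => l.getLast? = some false) := by
  ext l'
  simp only [Finset.mem_image, Finset.mem_filter, mem_setF]
  constructor
  · rintro ⟨l, ⟨h1, h2, h3⟩, rfl⟩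
    have hct : (l ++ [false]).count true = a := by simp [List.count_append, h1]
    have hcf : (l ++ [false]).count false = b + 1 := by simp [List.count_append, h2]
    refine ⟨⟨hct, hcf, qs_concat h3 ?_⟩, List.getLast?_concat⟩
    rw [hct, hcf]; exact hq
  · rintro ⟨⟨h1, h2, h3⟩, h4⟩
    have hne : l' ≠ [] := by rintro rfl; simp at h4
    have hdec : l'.dropLast ++ [false] = l' := by
      have hh := List.dropLast_append_getLast hne
      have hc : l'.getLast hne = false := by
        have := List.getLast?_eq_getLast hne
        rw [this] at h4; exact Option.some_injective _ h4
      rw [hc] at hh; exact hh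
    refine ⟨l'.dropLast, ⟨?_, ?_, ?_⟩, hdec⟩
    · have := congrArg (List.count true) hdec
      simp [List.count_append] at this; omega
    · have := congrArg (List.count false) hdec
      simp [List.count_append] at this; omega
    · rw [List.dropLast_eq_take]; exact qs_take h3 _

lemma card_split (q a b : ℕ) (hqa : q * (a + 1) ≤ b + 1) :
    (setF q (a + 1) (b + 1)).card =
      (setF q a (b + 1)).card + (setF q (a + 1) b).card := by
  have kt : ((setF q (a + 1) (b + 1)).filter (fun l => l.getLast? = some true)).card =
      (setF q a (b + 1)).card := by
    rw [← image_true q a (b + 1) hqa,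
      Finset.card_image_of_injective _ (List.append_left_injective _)]
  have kf : ((setF q (a + 1) (b + 1)).filter (fun l => l.getLast? = some false)).card =
      (setF q (a + 1) b).card := by
    rw [← image_false q (a + 1) b hqa,
      Finset.card_image_of_injective _ (List.append_left_injective _)]
  have split := Finset.card_filter_add_card_filter_not
    (s := setF q (a + 1) (b + 1)) (fun l => l.getLast? = some true)
  have hfalse : (setF q (a + 1) (b + 1)).filter (fun l => ¬ l.getLast? = some true) =
      (setF q (a + 1) (b + 1)).filter (fun l => l.getLast? = some false) := by
    apply Finset.filter_congr
    intro l hl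
    have hne : l ≠ [] := by
      rw [mem_setF] at hl
      obtain ⟨h1, -, -⟩ := hl
      rintro rfl
      have : ([] : List Bool).count true = 0 := rfl
      omega
    rw [List.getLast?_eq_getLast hne]
    cases l.getLast hne <;> simp
  rw [hfalse] at split
  omega

lemma setF_a_zero (q b : ℕ) : setF q 0 b = {List.replicate b false} := by
  ext l
  simp only [mem_setF, Finset.mem_singleton]
  constructor
  · rintro ⟨h1, h2, -⟩
    rw [List.count_eq_zero] at h1
    have : l = List.replicate l.length false := by
      apply List.eq_replicate_of_mem
      intro x hx
      cases x
      · rfl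
      · exact absurd hx h1
    rw [length_eq_counts, List.count_eq_zero.2 h1, h2] at this
    rw [this]; norm_num
  · rintro rfl
    refine ⟨by simp [List.count_replicate], by simp [List.count_replicate], ?_⟩
    intro m hm
    simp [List.take_replicate, List.count_replicate]

lemma setF_b_zero (q a : ℕ) (hq : q * a ≤ 0) : setF q a 0 = {List.replicate a true} := by
  ext l
  simp only [mem_setF, Finset.mem_singleton]
  constructor
  · rintro ⟨h1, h2, -⟩
    rw [List.count_eq_zero] at h2
    have : l = List.replicate l.length true := by
      apply List.eq_replicate_of_mem
      intro x hx
      cases x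
      · exact absurd hx h2
      · rfl
    rw [length_eq_counts, h1, List.count_eq_zero.2 h2] at this
    rw [this]; norm_num
  · rintro rfl
    refine ⟨by simp [List.count_replicate], by simp [List.count_replicate], ?_⟩
    intro m hm
    simp only [List.take_replicate, List.count_replicate]
    norm_num
    rcases Nat.mul_eq_zero.1 (Nat.le_zero.1 hq) with h | h
    · exact Or.inl h
    · exact Or.inr (Or.inr h)

lemma card_setF (q : ℕ) : ∀ n a b : ℕ, a + b = n → q * a ≤ b →
    ((setF q a b).card : ℚ) = ((b : ℚ) + 1 - q * a) / (b + 1) * Nat.choose (a + b) a := by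
  intro n
  induction n using Nat.strong_induction_on with
  | _ n ih =>
    intro a b hn hqa
    rcases Nat.eq_zero_or_pos a with rfl | ha
    · rw [setF_a_zero]
      have hb0 : ((b : ℚ) + 1) ≠ 0 := by positivity
      simp [div_self hb0]
    rcases Nat.eq_zero_or_pos b with rfl | hb
    · rw [setF_b_zero q a hqa]
      have : q * a = 0 := by omega
      have h0 : (q : ℚ) * a = 0 := by exact_mod_cast this
      simp [h0]
    -- main case: a = a'+1, b = b'+1
    obtain ⟨a', rfl⟩ : ∃ a', a = a' + 1 := ⟨a - 1, by omega⟩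
    obtain ⟨b', rfl⟩ : ∃ b', b = b' + 1 := ⟨b - 1, by omega⟩
    rw [card_split q a' b' hqa]
    have h1 : ((setF q a' (b' + 1)).card : ℚ) =
        ((b' : ℚ) + 1 + 1 - q * a') / (b' + 1 + 1) * Nat.choose (a' + (b' + 1)) a' := by
      have := ih (a' + (b' + 1)) (by omega) a' (b' + 1) rfl
        (le_trans (Nat.mul_le_mul_left q (Nat.le_succ a')) hqa)
      push_cast at this ⊢
      convert this using 3
    have h2 : ((setF q (a' + 1) b').card : ℚ) =
        ((b' : ℚ) + 1 - q * (a' + 1)) / (b' + 1) * Nat.choose (a' + 1 + b') (a' + 1) := by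
      rcases le_or_gt (q * (a' + 1)) b' with h | h
      · have := ih (a' + 1 + b') (by omega) (a' + 1) b' rfl h
        push_cast at this ⊢
        convert this using 3
      · have heq : q * (a' + 1) = b' + 1 := by omega
        rw [setF_empty (by omega)]
        have : ((b' : ℚ) + 1 - q * (a' + 1)) = 0 := by
          have := congrArg (fun x : ℕ => (x : ℚ)) heq
          push_cast at this
          linarith
        simp [this]
    rw [Nat.cast_add, h1, h2]
    -- binomial identities
    set A : ℕ := Nat.choose (a' + b' + 1) a' with hA
    set B : ℕ := Nat.choose (a' + b' + 1) (a' + 1) with hB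
    have hC : Nat.choose (a' + 1 + (b' + 1)) (a' + 1) = A + B := by
      have := Nat.choose_succ_succ (a' + b' + 1) a'
      rw [hA, hB]
      convert this using 2
      omega
    have hAB : ((a' : ℚ) + 1) * B = ((b' : ℚ) + 1) * A := by
      have := Nat.choose_succ_right_eq (a' + b' + 1) a'
      have hsub : a' + b' + 1 - a' = b' + 1 := by omega
      rw [hsub] at this
      have : (B * (a' + 1) : ℕ) = (A * (b' + 1) : ℕ) := this
      have := congrArg (fun x : ℕ => (x : ℚ)) this
      push_cast at this
      linarith
    have hrw1 : (a' + (b' + 1)) = a' + b' + 1 := by omega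
    have hrw2 : (a' + 1 + b') = a' + b' + 1 := by omega
    rw [hrw1, hrw2, hC, ← hA, ← hB]
    have hb1 : ((b' : ℚ) + 1) ≠ 0 := by positivity
    have hb2 : ((b' : ℚ) + 1 + 1) ≠ 0 := by positivity
    push_cast
    field_simp
    linear_combination (-(q : ℚ) * ((b' : ℚ) + 1 + 1) + (q : ℚ) * ((b' : ℚ) + 1)) * hAB

end CQS

/-- For `k, q ≥ 0` and `p ≥ 1`, the number of `q`-satisfying sequences with exactly
`k` 1's and `qk + p − 1` 0's equals `(p/(qk+p)) · C((q+1)k+p−1, k)`. -/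
theorem count_q_satisfying (k q p : ℕ) (hp : 1 ≤ p) :
    (Nat.card {l : List Bool //
        l.count true = k ∧ l.count false = q * k + p - 1 ∧ QSatisfying q l} : ℚ) =
      (p : ℚ) / (q * k + p) * Nat.choose ((q + 1) * k + p - 1) k := by
  set b := q * k + p - 1 with hb
  have hcard : Nat.card {l : List Bool //
      l.count true = k ∧ l.count false = b ∧ QSatisfying q l} = (CQS.setF q k b).card := by
    rw [← Nat.card_eq_finsetCard]
    exact Nat.card_congr (Equiv.subtypeEquivRight fun l => CQS.mem_setF.symm)
  rw [hcard, CQS.card_setF q (k + b) k b rfl (by omega)]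
  have h1 : ((b : ℚ) + 1 - q * k) = p := by
    have : (b : ℕ) + 1 = q * k + p := by omega
    have := congrArg (fun x : ℕ => (x : ℚ)) this
    push_cast at this
    linarith
  have h2 : ((b : ℚ) + 1) = q * k + p := by
    have : (b : ℕ) + 1 = q * k + p := by omega
    have := congrArg (fun x : ℕ => (x : ℚ)) this
    push_cast at this
    linarith
  have h3 : k + b = (q + 1) * k + p - 1 := by
    have hqk : (q + 1) * k = q * k + k := by ring
    omega
  rw [h1, h2, h3]
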